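/- Let Mᵢ be the midpoint of side VᵢV_{i+1} of an equidistant Simson polygon, and pᵢ the vertical line through Mᵢ (orthogonal to the Simson line L = x-axis). Then the reflection of pᵢ in the line VᵢV_{i+1} passes through the Simson point S = (0, s). -/

import Mathlib

/-- Let `Mᵢ = (2(X+iΔ), (X+iΔ)²/s)` be the midpoint of the side `VᵢVᵢ₊₁` of an
equidistant Simson polygon, whose side line is `y = ((X+iΔ)/s) x - (X+iΔ)²/s`, and let `pᵢ`
be the vertical line `x = 2(X+iΔ)` through `Mᵢ` (orthogonal to the Simson line, the x-axis).
Then the reflection of `pᵢ` in the side line passes through the Simson point `S = (0,s)`: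
equivalently, the reflection `R` of `S` across the side line lies on `pᵢ`. -/
theorem stmt_16 (s X Δ : ℝ) (hs : s ≠ 0) (hΔ : 0 < Δ) (i : ℕ) (R : ℝ × ℝ)
    -- the midpoint of `S = (0,s)` and `R` lies on the line `y = ((X+iΔ)/s) x - (X+iΔ)²/s`:
    (hmid : (s + R.2) / 2 = ((X + (i : ℝ) * Δ) / s) * ((0 + R.1) / 2)
        - (X + (i : ℝ) * Δ) ^ 2 / s)
    -- `S - R` is orthogonal to the direction `(s, X+iΔ)` of that line:
    (hperp : (0 - R.1) * s + (s - R.2) * (X + (i : ℝ) * Δ) = 0) :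
    R.1 = 2 * (X + (i : ℝ) * Δ) := by
  set a := X + (i : ℝ) * Δ with ha
  have key : R.1 * (a ^ 2 + s ^ 2) = 2 * a * (a ^ 2 + s ^ 2) := by
    have h1 : s * (s + R.2) = a * R.1 - 2 * a ^ 2 := by
      have h2 := hmid
      field_simp at h2
      have h3 : (2 * s) * (s * (s + R.2)) = (2 * s) * (a * R.1 - 2 * a ^ 2) := by
        linear_combination (2 * s) * h2
      exact mul_left_cancel₀ (by simp [hs]) h3
    linear_combination (-a) * h1 - s * hperp
  have hpos : a ^ 2 + s ^ 2 > 0 := by positivity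
  have := mul_right_cancel₀ (ne_of_gt hpos) key
  linarith
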